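/- Let α_1, α_2 > −1 with α_1 − α_2 ∉ ℤ. For each pair of nonnegative integers (n, m), let L_{n,m} denote the monic polynomial of degree n + m satisfying ∫_0^∞ L_{n,m}(x) x^{α_1} e^{−x} x^k dx = 0 for k = 0,…,n−1 and ∫_0^∞ L_{n,m}(x) x^{α_2} e^{−x} x^k dx = 0 for k = 0,…,m−1, and set P_{2n} = L_{n,n}, P_{2n+1} = L_{n+1,n}, with the convention P_j = 0 for j < 0. Then for every N ≥ 0: x P_N(x) = P_{N+1}(x) + b_N P_N(x) + c_N P_{N−1}(x) + d_N P_{N−2}(x), where b_{2n} = 3n + α_1 + 1, b_{2n+1} = 3n + α_2 + 2, c_{2n} = n(3n + α_1 + α_2), c_{2n+1} = 3n² + (α_1 + α_2 + 3)n + α_1 + 1, d_{2n} = n(n + α_1)(n + α_1 − α_2), and d_{2n+1} = n(n + α_2)(n + α_2 − α_1). -/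

import Mathlib

open MeasureTheory Polynomial Finset

namespace ML9


lemma exp_pos_arg {α : ℝ} (hα : -1 < α) (k : ℕ) : (0:ℝ) < α + k + 1 := by
  have : (0:ℝ) ≤ k := Nat.cast_nonneg k
  linarith

lemma wt_int {α : ℝ} (hα : -1 < α) (k : ℕ) :
    IntegrableOn (fun x : ℝ => x ^ α * Real.exp (-x) * x ^ k) (Set.Ioi 0) := by
  have h := Real.GammaIntegral_convergent (exp_pos_arg hα k)
  refine h.congr_fun (fun x hx => ?_) measurableSet_Ioi
  have hx' : (0:ℝ) < x := hx
  beta_reduce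
  rw [show α + ↑k + 1 - 1 = α + ↑k by ring, Real.rpow_add hx', Real.rpow_natCast]
  ring

lemma wt_val {α : ℝ} (hα : -1 < α) (k : ℕ) :
    ∫ x in Set.Ioi (0:ℝ), x ^ α * Real.exp (-x) * x ^ k = Real.Gamma (α + k + 1) := by
  rw [Real.Gamma_eq_integral (exp_pos_arg hα k)]
  refine setIntegral_congr_fun measurableSet_Ioi (fun x hx => ?_)
  have hx' : (0:ℝ) < x := hx
  rw [show α + ↑k + 1 - 1 = α + ↑k by ring, Real.rpow_add hx', Real.rpow_natCast]
  ring

lemma key1 {α : ℝ} (hα : -1 < α) (p : ℝ[X]) (k : ℕ) :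
    IntegrableOn (fun x : ℝ => p.eval x * (x ^ α * Real.exp (-x)) * x ^ k) (Set.Ioi 0) := by
  induction p using Polynomial.induction_on' with
  | add p q hp hq =>
      refine IntegrableOn.congr_fun (hp.add hq) (fun x _ => ?_) measurableSet_Ioi
      simp [eval_add, add_mul]
  | monomial n a =>
      have h := (wt_int hα (k + n)).const_mul a
      refine IntegrableOn.congr_fun h (fun x _ => ?_) measurableSet_Ioi
      simp [eval_monomial, pow_add]; ring

lemma key2 {α : ℝ} (hα : -1 < α) (p : ℝ[X]) (k : ℕ) {s : ℕ} (hs : p.natDegree < s) :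
    ∫ x in Set.Ioi (0:ℝ), p.eval x * (x ^ α * Real.exp (-x)) * x ^ k
      = ∑ j ∈ range s, p.coeff j * Real.Gamma (α + k + 1 + j) := by
  have hfun : ∀ x : ℝ, p.eval x * (x ^ α * Real.exp (-x)) * x ^ k
      = ∑ j ∈ range s, p.coeff j * (x ^ α * Real.exp (-x) * x ^ (k + j)) := by
    intro x
    rw [Polynomial.eval_eq_sum_range' hs, Finset.sum_mul, Finset.sum_mul]
    refine Finset.sum_congr rfl (fun j _ => ?_)
    rw [pow_add]; ring
  rw [show (fun x : ℝ => p.eval x * (x ^ α * Real.exp (-x)) * x ^ k)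
      = fun x : ℝ => ∑ j ∈ range s, p.coeff j * (x ^ α * Real.exp (-x) * x ^ (k + j)) from
    funext hfun]
  rw [integral_finset_sum _ (fun j _ => ((wt_int hα (k + j)).const_mul _))]
  refine Finset.sum_congr rfl (fun j _ => ?_)
  rw [integral_const_mul, wt_val hα (k + j)]
  congr 1
  push_cast; ring




lemma gamma_add_nat {x : ℝ} (hx : 0 < x) (j : ℕ) :
    Real.Gamma (x + j) = Real.Gamma x * (ascPochhammer ℝ j).eval x := by
  induction j with
  | zero => simp
  | succ n ih =>
      have hxn : x + (n:ℝ) ≠ 0 := by positivity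
      rw [show x + ((n+1 : ℕ):ℝ) = (x + n) + 1 by push_cast; ring,
        Real.Gamma_add_one hxn, ih, ascPochhammer_succ_right]
      simp [mul_comm, mul_assoc, mul_left_comm]

lemma det_gamma {N : ℕ} (z : Fin N → ℝ) (hz : ∀ i, 0 < z i) :
    Matrix.det (Matrix.of fun i j : Fin N => Real.Gamma (z i + j)) =
      (∏ i, Real.Gamma (z i)) * ∏ i : Fin N, ∏ j ∈ Finset.Ioi i, (z j - z i) := by
  have h1 : (Matrix.of fun i j : Fin N => Real.Gamma (z i + j)) =
      Matrix.of fun i j : Fin N =>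
        Real.Gamma (z i) * (Matrix.of fun i j : Fin N => (ascPochhammer ℝ (j:ℕ)).eval (z i)) i j := by
    ext i j
    simp [gamma_add_nat (hz i) j]
  rw [h1, Matrix.det_mul_column (fun i => Real.Gamma (z i))]
  rw [← Matrix.det_eval_matrixOfPolynomials_eq_det_vandermonde z
      (fun j => ascPochhammer ℝ (j:ℕ))
      (fun i => ascPochhammer_natDegree ℝ (i:ℕ))
      (fun i => monic_ascPochhammer _ _), Matrix.det_vandermonde]




noncomputable def nds (α β : ℝ) (a b : ℕ) : Fin (a+b) → ℝ :=
  Fin.append (fun i : Fin a => α + 1 + i) (fun i : Fin b => β + 1 + i)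

lemma nds_pos {α β : ℝ} (hα : -1 < α) (hβ : -1 < β) (a b : ℕ) (i : Fin (a+b)) :
    0 < nds α β a b i := by
  refine Fin.addCases (fun i₀ => ?_) (fun i₀ => ?_) i <;>
    simp only [nds, Fin.append_left, Fin.append_right] <;>
    · have : (0:ℝ) ≤ (i₀ : ℕ) := Nat.cast_nonneg _
      linarith

lemma fin_add_rep {a b : ℕ} (x : Fin (a+b)) :
    (∃ x₀ : Fin a, x = Fin.castAdd b x₀) ∨ (∃ x₀ : Fin b, x = Fin.natAdd a x₀) :=
  Fin.addCases (fun x₀ => .inl ⟨x₀, rfl⟩) (fun x₀ => .inr ⟨x₀, rfl⟩) x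

lemma nds_inj {α β : ℝ} (hαβ : ∀ z : ℤ, α - β ≠ z) (a b : ℕ) :
    Function.Injective (nds α β a b) := by
  intro i j hij
  rcases fin_add_rep i with ⟨i₀, rfl⟩ | ⟨i₀, rfl⟩ <;>
    rcases fin_add_rep j with ⟨j₀, rfl⟩ | ⟨j₀, rfl⟩ <;>
    simp only [nds, Fin.append_left, Fin.append_right] at hij
  · have h : ((i₀:ℕ):ℝ) = ((j₀:ℕ):ℝ) := by linarith
    exact congrArg _ (Fin.ext (Nat.cast_injective h))
  · exact absurd (show α - β = (((j₀:ℕ):ℤ) - ((i₀:ℕ):ℤ) : ℤ) by push_cast; linarith) (hαβ _)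
  · exact absurd (show α - β = (((i₀:ℕ):ℤ) - ((j₀:ℕ):ℤ) : ℤ) by push_cast; linarith) (hαβ _)
  · have h : ((i₀:ℕ):ℝ) = ((j₀:ℕ):ℝ) := by linarith
    exact congrArg _ (Fin.ext (Nat.cast_injective h))
















lemma vdm_ne_zero {N : ℕ} {z : Fin N → ℝ} (hz : Function.Injective z) :
    (∏ i : Fin N, ∏ j ∈ Finset.Ioi i, (z j - z i)) ≠ 0 := by
  refine Finset.prod_ne_zero_iff.mpr (fun i _ => Finset.prod_ne_zero_iff.mpr (fun j hj => ?_))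
  exact sub_ne_zero.mpr (fun h => absurd (hz h) (ne_of_gt (Finset.mem_Ioi.mp hj)))

lemma det_nds_ne {α β : ℝ} (hα : -1 < α) (hβ : -1 < β) (hαβ : ∀ z : ℤ, α - β ≠ z)
    (a b : ℕ) :
    (Matrix.of fun i j : Fin (a+b) => Real.Gamma (nds α β a b i + j)).det ≠ 0 := by
  rw [det_gamma _ (nds_pos hα hβ a b)]
  exact mul_ne_zero
    (Finset.prod_ne_zero_iff.mpr
      (fun i _ => (Real.Gamma_pos_of_pos (nds_pos hα hβ a b i)).ne'))
    (vdm_ne_zero (nds_inj hαβ a b))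

lemma row_sum {γ : ℝ} (hγ : -1 < γ) (D : ℝ[X]) {N : ℕ} (hD : D.natDegree < N) (k : ℕ) :
    (∫ x in Set.Ioi (0:ℝ), D.eval x * (x ^ γ * Real.exp (-x)) * x ^ k)
      = ∑ j : Fin N, Real.Gamma (γ + 1 + k + j) * D.coeff j := by
  rw [key2 hγ D k hD,
    Fin.sum_univ_eq_sum_range (fun j => Real.Gamma (γ + 1 + k + j) * D.coeff j) N]
  refine Finset.sum_congr rfl (fun j _ => ?_)
  rw [mul_comm]
  congr 2
  ring

lemma kernel {α β : ℝ} (hα : -1 < α) (hβ : -1 < β) (hαβ : ∀ z : ℤ, α - β ≠ z)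
    (a b : ℕ) (D : ℝ[X]) (hD : D.natDegree < a + b)
    (o1 : ∀ k < a, ∫ x in Set.Ioi (0:ℝ), D.eval x * (x ^ α * Real.exp (-x)) * x ^ k = 0)
    (o2 : ∀ k < b, ∫ x in Set.Ioi (0:ℝ), D.eval x * (x ^ β * Real.exp (-x)) * x ^ k = 0) :
    D = 0 := by
  have hv : (Matrix.of fun i j : Fin (a+b) => Real.Gamma (nds α β a b i + j)).mulVec
      (fun j => D.coeff j) = 0 := by
    funext i
    rcases fin_add_rep i with ⟨i₀, rfl⟩ | ⟨i₀, rfl⟩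
    · have h := o1 i₀ i₀.isLt
      rw [row_sum hα D hD (i₀ : ℕ)] at h
      simpa [Matrix.mulVec, dotProduct, nds, Fin.append_left] using h
    · have h := o2 i₀ i₀.isLt
      rw [row_sum hβ D hD (i₀ : ℕ)] at h
      simpa [Matrix.mulVec, dotProduct, nds, Fin.append_right] using h
  have hc : (fun j : Fin (a+b) => D.coeff j) = 0 :=
    Matrix.eq_zero_of_mulVec_eq_zero (det_nds_ne hα hβ hαβ a b) hv
  by_contra hD0
  have hlc := Polynomial.leadingCoeff_ne_zero.mpr hD0
  exact hlc (by simpa using congrFun hc ⟨D.natDegree, hD⟩)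
















noncomputable def PP (c : ℝ) (a : ℕ) : ℝ := ∏ i ∈ Finset.range a, (c - i)

lemma prod_Ioi_castSucc {M : Type*} [CommMonoid M] {n : ℕ} (i : Fin n) (f : Fin (n+1) → M) :
    ∏ j ∈ Finset.Ioi (Fin.castSucc i), f j
      = (∏ j ∈ Finset.Ioi i, f (Fin.castSucc j)) * f (Fin.last n) := by
  have hset : Finset.Ioi (Fin.castSucc i)
      = insert (Fin.last n) ((Finset.Ioi i).image Fin.castSucc) := by
    ext j
    simp only [Finset.mem_Ioi, Finset.mem_insert, Finset.mem_image]
    constructor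
    · intro h
      rcases Fin.eq_castSucc_or_eq_last j with ⟨j', rfl⟩ | rfl
      · exact Or.inr ⟨j', Fin.castSucc_lt_castSucc_iff.mp h, rfl⟩
      · exact Or.inl rfl
    · rintro (rfl | ⟨x, hx, rfl⟩)
      · exact Fin.castSucc_lt_last i
      · exact Fin.castSucc_lt_castSucc_iff.mpr hx
  have hnm : Fin.last n ∉ (Finset.Ioi i).image Fin.castSucc := by
    simp only [Finset.mem_image]
    rintro ⟨x, _, hx⟩
    exact (Fin.castSucc_lt_last x).ne hx
  rw [hset, Finset.prod_insert hnm,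
    Finset.prod_image (fun x _ y _ h => Fin.castSucc_injective n h), mul_comm]

lemma master {α β : ℝ} (hα : -1 < α) (hβ : -1 < β) (hαβ : ∀ z : ℤ, α - β ≠ z)
    (a b : ℕ) (p : ℝ[X]) (hm : p.Monic) (hd : p.natDegree = a + b)
    (o1 : ∀ k < a, ∫ x in Set.Ioi (0:ℝ), p.eval x * (x ^ α * Real.exp (-x)) * x ^ k = 0)
    (o2 : ∀ k < b, ∫ x in Set.Ioi (0:ℝ), p.eval x * (x ^ β * Real.exp (-x)) * x ^ k = 0)
    (k : ℕ) :
    ∫ x in Set.Ioi (0:ℝ), p.eval x * (x ^ α * Real.exp (-x)) * x ^ k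
      = Real.Gamma (α + k + 1) * PP (k:ℝ) a * PP (α - β + k) b := by
  have hkpos : (0:ℝ) ≤ (k:ℝ) := Nat.cast_nonneg k
  set z : Fin (a+b) → ℝ := nds α β a b with hz
  set y : ℝ := α + 1 + k with hy
  set z' : Fin (a+b+1) → ℝ := Fin.snoc z y with hz'
  set A : Matrix (Fin (a+b+1)) (Fin (a+b+1)) ℝ :=
    Matrix.of (fun i j : Fin (a+b+1) => Real.Gamma (z' i + j)) with hA
  set c : Fin (a+b+1) → ℝ := fun j => p.coeff j with hc
  set V : ℝ := ∫ x in Set.Ioi (0:ℝ), p.eval x * (x ^ α * Real.exp (-x)) * x ^ k with hV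
  have hdlt : p.natDegree < a + b + 1 := by omega
  -- Step 1
  have h1 : A.mulVec c = fun i => if i = Fin.last (a+b) then V else 0 := by
    funext i
    refine Fin.lastCases ?_ (fun i₀ => ?_) i
    · rw [if_pos rfl]
      have h := row_sum hα p hdlt k
      rw [hV, h]
      simp only [hA, Matrix.mulVec, dotProduct, Matrix.of_apply, hz', Fin.snoc_last, hc]
      rfl
    · rw [if_neg (Fin.castSucc_lt_last i₀).ne]
      rcases fin_add_rep i₀ with ⟨i₁, rfl⟩ | ⟨i₁, rfl⟩
      · have h := o1 i₁ i₁.isLt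
        rw [row_sum hα p hdlt (i₁ : ℕ)] at h
        simpa only [hA, Matrix.mulVec, dotProduct, Matrix.of_apply, hz',
          Fin.snoc_castSucc, hz, nds, Fin.append_left, hc] using h
      · have h := o2 i₁ i₁.isLt
        rw [row_sum hβ p hdlt (i₁ : ℕ)] at h
        simpa only [hA, Matrix.mulVec, dotProduct, Matrix.of_apply, hz',
          Fin.snoc_castSucc, hz, nds, Fin.append_right, hc] using h
  -- Step 2
  have h2 : A.det • c = A.adjugate.mulVec (A.mulVec c) := by
    rw [Matrix.mulVec_mulVec, Matrix.adjugate_mul, Matrix.smul_mulVec, Matrix.one_mulVec]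
  have hclast : c (Fin.last (a+b)) = 1 := by
    have : ((Fin.last (a+b) : Fin (a+b+1)) : ℕ) = a + b := Fin.val_last _
    rw [hc]
    simp only [this]
    rw [← hd]
    exact hm.coeff_natDegree
  have h3 : A.det = A.adjugate (Fin.last (a+b)) (Fin.last (a+b)) * V := by
    have h2' := congrFun h2 (Fin.last (a+b))
    rw [h1] at h2'
    simp only [Pi.smul_apply, smul_eq_mul, hclast, mul_one] at h2'
    rw [h2']
    simp only [Matrix.mulVec, dotProduct, mul_ite, mul_zero]
    rw [Finset.sum_ite_eq' Finset.univ (Fin.last (a+b))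
      (fun j => A.adjugate (Fin.last (a+b)) j * V)]
    simp
  -- Step 3: adjugate entry = minor determinant
  have h4 : A.adjugate (Fin.last (a+b)) (Fin.last (a+b))
      = (Matrix.of fun i j : Fin (a+b) => Real.Gamma (z i + j)).det := by
    rw [Matrix.adjugate_apply, Matrix.det_succ_row _ (Fin.last (a+b))]
    rw [Finset.sum_eq_single (Fin.last (a+b))]
    · rw [Matrix.updateRow_self]
      simp only [Pi.single_eq_same]
      have hsign : ((-1 : ℝ)) ^ ((Fin.last (a+b) : ℕ) + (Fin.last (a+b) : ℕ)) = 1 :=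
        Even.neg_one_pow ⟨(Fin.last (a+b) : ℕ), rfl⟩
      simp only [hsign, one_mul, mul_one]
      congr 1
      ext i j
      simp only [Matrix.submatrix_apply, Fin.succAbove_last, Matrix.of_apply]
      rw [Matrix.updateRow_ne (Fin.castSucc_lt_last i).ne]
      simp only [hA, Matrix.of_apply, hz', Fin.snoc_castSucc, Fin.coe_castSucc]
    · intro j _ hj
      rw [Matrix.updateRow_self, Pi.single_eq_of_ne hj, mul_zero, zero_mul]
    · intro h
      exact absurd (Finset.mem_univ _) h
  -- Step 4: determinant values
  have hypos : 0 < y := by rw [hy]; linarith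
  have hz'pos : ∀ i, 0 < z' i := by
    intro i
    refine Fin.lastCases ?_ (fun i₀ => ?_) i
    · rw [hz', Fin.snoc_last]; exact hypos
    · rw [hz', Fin.snoc_castSucc]; exact nds_pos hα hβ a b i₀
  have hdetA : A.det = (∏ i, Real.Gamma (z' i)) * ∏ i : Fin (a+b+1), ∏ j ∈ Finset.Ioi i, (z' j - z' i) :=
    det_gamma z' hz'pos
  have hdetM := det_gamma z (nds_pos hα hβ a b)
  have hMne : (Matrix.of fun i j : Fin (a+b) => Real.Gamma (z i + j)).det ≠ 0 :=
    det_nds_ne hα hβ hαβ a b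
  have hp1 : ∏ i, Real.Gamma (z' i) = (∏ i, Real.Gamma (z i)) * Real.Gamma y := by
    rw [Fin.prod_univ_castSucc]
    simp only [hz', Fin.snoc_castSucc, Fin.snoc_last]
  have hp2 : (∏ i : Fin (a+b+1), ∏ j ∈ Finset.Ioi i, (z' j - z' i))
      = (∏ i : Fin (a+b), ∏ j ∈ Finset.Ioi i, (z j - z i)) * ∏ i : Fin (a+b), (y - z i) := by
    rw [Fin.prod_univ_castSucc]
    have hlast : Finset.Ioi (Fin.last (a+b)) = (∅ : Finset (Fin (a+b+1))) := by
      ext j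
      simp only [Finset.mem_Ioi, Finset.notMem_empty, iff_false, not_lt]
      exact Fin.le_last j
    rw [hlast, Finset.prod_empty, mul_one, ← Finset.prod_mul_distrib]
    refine Finset.prod_congr rfl (fun i _ => ?_)
    rw [prod_Ioi_castSucc i (fun j => z' j - z' (Fin.castSucc i))]
    simp only [hz', Fin.snoc_castSucc, Fin.snoc_last]
  -- Step 5: solve for V
  have hne : (∏ i, Real.Gamma (z i)) * (∏ i : Fin (a+b), ∏ j ∈ Finset.Ioi i, (z j - z i)) ≠ 0 := by
    rw [← hdetM]; exact hMne
  have hfinal : V = Real.Gamma y * ∏ i : Fin (a+b), (y - z i) := by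
    apply mul_left_cancel₀ hne
    calc (∏ i, Real.Gamma (z i)) * (∏ i : Fin (a+b), ∏ j ∈ Finset.Ioi i, (z j - z i)) * V
        = (Matrix.of fun i j : Fin (a+b) => Real.Gamma (z i + j)).det * V := by rw [hdetM]
      _ = A.det := by rw [h3, h4]
      _ = (∏ i, Real.Gamma (z i)) * (∏ i : Fin (a+b), ∏ j ∈ Finset.Ioi i, (z j - z i))
            * (Real.Gamma y * ∏ i : Fin (a+b), (y - z i)) := by
          rw [hdetA, hp1, hp2]; ring
  -- Step 6: final form
  rw [hfinal]
  have hsplit : ∏ i : Fin (a+b), (y - z i) = PP (k:ℝ) a * PP (α - β + k) b := by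
    rw [Fin.prod_univ_add (f := fun i : Fin (a+b) => y - z i)]
    congr 1
    · rw [PP, ← Fin.prod_univ_eq_prod_range (fun i : ℕ => (k:ℝ) - i) a]
      refine Finset.prod_congr rfl (fun i _ => ?_)
      simp only [hz, nds, Fin.append_left, hy]
      ring
    · rw [PP, ← Fin.prod_univ_eq_prod_range (fun i : ℕ => α - β + (k:ℝ) - i) b]
      refine Finset.prod_congr rfl (fun i _ => ?_)
      simp only [hz, nds, Fin.append_right, hy]
      ring
  rw [hsplit, show y = α + (k:ℝ) + 1 by rw [hy]; ring]
  ring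






lemma PP_zero (c : ℝ) : PP c 0 = 1 := by simp [PP]

lemma PP_succ (c : ℝ) (a : ℕ) : PP c (a+1) = PP c a * (c - a) :=
  Finset.prod_range_succ _ _

lemma PP_shift (c : ℝ) (a : ℕ) : PP (c+1) (a+1) = (c+1) * PP c a := by
  rw [PP, Finset.prod_range_succ']
  simp only [Nat.cast_zero, sub_zero]
  rw [mul_comm]
  congr 1
  refine Finset.prod_congr rfl (fun i _ => ?_)
  push_cast
  ring



lemma expand {α : ℝ} (hα : -1 < α) (p q r s t : ℝ[X]) (b c d : ℝ) (k : ℕ) :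
    ∫ x in Set.Ioi (0:ℝ),
        (X * p - (q + C b * r + C c * s + C d * t)).eval x * (x ^ α * Real.exp (-x)) * x ^ k
      = (∫ x in Set.Ioi (0:ℝ), p.eval x * (x ^ α * Real.exp (-x)) * x ^ (k+1))
        - (∫ x in Set.Ioi (0:ℝ), q.eval x * (x ^ α * Real.exp (-x)) * x ^ k)
        - b * (∫ x in Set.Ioi (0:ℝ), r.eval x * (x ^ α * Real.exp (-x)) * x ^ k)
        - c * (∫ x in Set.Ioi (0:ℝ), s.eval x * (x ^ α * Real.exp (-x)) * x ^ k)
        - d * (∫ x in Set.Ioi (0:ℝ), t.eval x * (x ^ α * Real.exp (-x)) * x ^ k) := by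
  have hp := key1 hα p (k+1)
  have hq := key1 hα q k
  have hr := (key1 hα r k).const_mul b
  have hs := (key1 hα s k).const_mul c
  have ht := (key1 hα t k).const_mul d
  have hfun : (fun x : ℝ =>
      (X * p - (q + C b * r + C c * s + C d * t)).eval x * (x ^ α * Real.exp (-x)) * x ^ k)
      = fun x : ℝ => p.eval x * (x ^ α * Real.exp (-x)) * x ^ (k+1)
          - (q.eval x * (x ^ α * Real.exp (-x)) * x ^ k
             + (b * (r.eval x * (x ^ α * Real.exp (-x)) * x ^ k)
                + (c * (s.eval x * (x ^ α * Real.exp (-x)) * x ^ k)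
                   + d * (t.eval x * (x ^ α * Real.exp (-x)) * x ^ k)))) := by
    funext x
    simp only [eval_sub, eval_add, eval_mul, eval_X, eval_C]
    rw [pow_succ]
    ring
  have h45 : Integrable (fun x : ℝ => c * (s.eval x * (x ^ α * Real.exp (-x)) * x ^ k)
      + d * (t.eval x * (x ^ α * Real.exp (-x)) * x ^ k)) (volume.restrict (Set.Ioi 0)) :=
    hs.add ht
  have h345 : Integrable (fun x : ℝ => b * (r.eval x * (x ^ α * Real.exp (-x)) * x ^ k)
      + (c * (s.eval x * (x ^ α * Real.exp (-x)) * x ^ k)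
         + d * (t.eval x * (x ^ α * Real.exp (-x)) * x ^ k))) (volume.restrict (Set.Ioi 0)) :=
    hr.add h45
  have h2345 : Integrable (fun x : ℝ => q.eval x * (x ^ α * Real.exp (-x)) * x ^ k
      + (b * (r.eval x * (x ^ α * Real.exp (-x)) * x ^ k)
         + (c * (s.eval x * (x ^ α * Real.exp (-x)) * x ^ k)
            + d * (t.eval x * (x ^ α * Real.exp (-x)) * x ^ k)))) (volume.restrict (Set.Ioi 0)) :=
    hq.add h345
  rw [hfun, integral_sub hp h2345, integral_add hq h345, integral_add hr h45,
    integral_add hs ht, integral_const_mul, integral_const_mul, integral_const_mul]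
  ring

lemma deg_lt (e : ℕ) (p q r s t : ℝ[X]) (hpm : p.Monic) (hdp : p.natDegree = e)
    (hqm : q.Monic) (hdq : q.natDegree = e+1) (hr : r.natDegree ≤ e) (hs : s.natDegree ≤ e)
    (ht : t.natDegree ≤ e) (b c d : ℝ) :
    (X * p - (q + C b * r + C c * s + C d * t)).natDegree < e + 1 := by
  have hb1 : (X * p).natDegree ≤ e + 1 := by
    refine le_trans (natDegree_mul_le) ?_
    rw [natDegree_X, hdp]
    omega
  have hCb : (C b * r).natDegree ≤ e := le_trans natDegree_mul_le (by simp [natDegree_C]; omega)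
  have hCc : (C c * s).natDegree ≤ e := le_trans natDegree_mul_le (by simp [natDegree_C]; omega)
  have hCd : (C d * t).natDegree ≤ e := le_trans natDegree_mul_le (by simp [natDegree_C]; omega)
  have hsum : (q + C b * r + C c * s + C d * t).natDegree ≤ e + 1 := by
    refine le_trans (natDegree_add_le _ _) (max_le ?_ (by omega))
    refine le_trans (natDegree_add_le _ _) (max_le ?_ (by omega))
    refine le_trans (natDegree_add_le _ _) (max_le (by omega) (by omega))
  have hD : (X * p - (q + C b * r + C c * s + C d * t)).natDegree ≤ e + 1 :=
    le_trans (natDegree_sub_le _ _) (max_le hb1 hsum)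
  have hcoeff : (X * p - (q + C b * r + C c * s + C d * t)).coeff (e+1) = 0 := by
    simp only [coeff_sub, coeff_add, coeff_C_mul, coeff_X_mul]
    rw [show p.coeff e = 1 from hdp ▸ hpm.coeff_natDegree,
      show q.coeff (e+1) = 1 from hdq ▸ hqm.coeff_natDegree,
      coeff_eq_zero_of_natDegree_lt (lt_of_le_of_lt hr (Nat.lt_succ_self e)),
      coeff_eq_zero_of_natDegree_lt (lt_of_le_of_lt hs (Nat.lt_succ_self e)),
      coeff_eq_zero_of_natDegree_lt (lt_of_le_of_lt ht (Nat.lt_succ_self e))]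
    ring
  rcases lt_or_eq_of_le hD with h | h
  · exact h
  · exfalso
    have hlc : (X * p - (q + C b * r + C c * s + C d * t)).leadingCoeff = 0 := by
      rw [leadingCoeff, h]; exact hcoeff
    rw [leadingCoeff_eq_zero] at hlc
    rw [hlc] at h
    simp at h



end ML9

/-- **Recurrence relation for multiple Laguerre polynomials of the first kind** (r = 2),
along the stepline `P_{2n} = L_{n,n}`, `P_{2n+1} = L_{n+1,n}`:
`x P_N = P_{N+1} + b_N P_N + c_N P_{N-1} + d_N P_{N-2}` with the explicit coefficients
`b_{2n} = 3n+α₁+1`, `b_{2n+1} = 3n+α₂+2`, `c_{2n} = n(3n+α₁+α₂)`,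
`c_{2n+1} = 3n²+(α₁+α₂+3)n+α₁+1`, `d_{2n} = n(n+α₁)(n+α₁-α₂)`,
`d_{2n+1} = n(n+α₂)(n+α₂-α₁)`. -/
theorem stmt_9 (α₁ α₂ : ℝ) (h1 : -1 < α₁) (h2 : -1 < α₂)
    (hZ : ∀ z : ℤ, α₁ - α₂ ≠ z)
    (L : ℕ → ℕ → Polynomial ℝ)
    (hmonic : ∀ n m, (L n m).Monic)
    (hdeg : ∀ n m, (L n m).natDegree = n + m)
    (horth1 : ∀ n m, ∀ k < n,
      ∫ x in Set.Ioi (0:ℝ), (L n m).eval x * (x ^ α₁ * Real.exp (-x)) * x ^ k = 0)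
    (horth2 : ∀ n m, ∀ k < m,
      ∫ x in Set.Ioi (0:ℝ), (L n m).eval x * (x ^ α₂ * Real.exp (-x)) * x ^ k = 0)
    (P : ℤ → Polynomial ℝ)
    (hPneg : ∀ j : ℤ, j < 0 → P j = 0)
    (hPeven : ∀ n : ℕ, P (2 * n) = L n n)
    (hPodd : ∀ n : ℕ, P (2 * n + 1) = L (n + 1) n) :
    (∀ n : ℕ, Polynomial.X * P (2 * n) = P (2 * n + 1)
        + Polynomial.C (3 * (n : ℝ) + α₁ + 1) * P (2 * n)
        + Polynomial.C ((n : ℝ) * (3 * n + α₁ + α₂)) * P (2 * n - 1)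
        + Polynomial.C ((n : ℝ) * (n + α₁) * (n + α₁ - α₂)) * P (2 * n - 2)) ∧
    (∀ n : ℕ, Polynomial.X * P (2 * n + 1) = P (2 * n + 2)
        + Polynomial.C (3 * (n : ℝ) + α₂ + 2) * P (2 * n + 1)
        + Polynomial.C (3 * (n : ℝ) ^ 2 + (α₁ + α₂ + 3) * n + α₁ + 1) * P (2 * n)
        + Polynomial.C ((n : ℝ) * (n + α₂) * (n + α₂ - α₁)) * P (2 * n - 1)) := by
  have hZ' : ∀ z : ℤ, α₂ - α₁ ≠ z := by
    intro z h
    exact hZ (-z) (by push_cast; linarith)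
  have val1 : ∀ a b k : ℕ,
      ∫ x in Set.Ioi (0:ℝ), (L a b).eval x * (x ^ α₁ * Real.exp (-x)) * x ^ k
        = Real.Gamma (α₁ + k + 1) * ML9.PP (k:ℝ) a * ML9.PP (α₁ - α₂ + k) b :=
    fun a b k =>
      ML9.master h1 h2 hZ a b (L a b) (hmonic a b) (hdeg a b) (horth1 a b) (horth2 a b) k
  have val2 : ∀ a b k : ℕ,
      ∫ x in Set.Ioi (0:ℝ), (L a b).eval x * (x ^ α₂ * Real.exp (-x)) * x ^ k
        = Real.Gamma (α₂ + k + 1) * ML9.PP (k:ℝ) b * ML9.PP (α₂ - α₁ + k) a :=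
    fun a b k =>
      ML9.master h2 h1 hZ' b a (L a b) (hmonic a b) (by rw [hdeg a b, Nat.add_comm])
        (horth2 a b) (horth1 a b) k
  have hG1 : ∀ k : ℕ, α₁ + (k:ℝ) + 1 ≠ 0 := fun k => (ML9.exp_pos_arg h1 k).ne'
  have hG2 : ∀ k : ℕ, α₂ + (k:ℝ) + 1 ≠ 0 := fun k => (ML9.exp_pos_arg h2 k).ne'
  constructor
  · -- even case
    intro n
    rcases n with _ | p
    · -- n = 0
      rw [hPeven 0, hPodd 0,
        show (2 * ((0:ℕ):ℤ) - 1 : ℤ) = (-1 : ℤ) by norm_num, hPneg (-1) (by norm_num),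
        show (2 * ((0:ℕ):ℤ) - 2 : ℤ) = (-2 : ℤ) by norm_num, hPneg (-2) (by norm_num),
        mul_zero, mul_zero, add_zero, add_zero]
      have hD0 : X * L 0 0 - (L 1 0 + C (3 * ((0:ℕ):ℝ) + α₁ + 1) * L 0 0
          + C 0 * L 0 0 + C 0 * L 0 0) = 0 := by
        apply ML9.kernel h1 h2 hZ 1 0
        · have h := ML9.deg_lt 0 (L 0 0) (L 1 0) (L 0 0) (L 0 0) (L 0 0)
            (hmonic 0 0) (by rw [hdeg]) (hmonic 1 0) (by rw [hdeg])
            (by rw [hdeg]) (by rw [hdeg]) (by rw [hdeg])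
            (3 * ((0:ℕ):ℝ) + α₁ + 1) 0 0
          exact lt_of_lt_of_le h (by omega)
        · intro k hk
          have hk0 : k = 0 := by omega
          subst hk0
          rw [ML9.expand h1, val1 0 0 (0+1), val1 1 0 0, val1 0 0 0]
          simp only [ML9.PP_succ, ML9.PP_zero]
          rw [show α₁ + ((0+1:ℕ):ℝ) + 1 = (α₁ + ((0:ℕ):ℝ) + 1) + 1 by norm_num,
            Real.Gamma_add_one (hG1 0)]
          push_cast
          ring
        · intro k hk
          omega
      simpa only [Polynomial.C_0, zero_mul, add_zero] using sub_eq_zero.mp hD0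
    · -- n = p + 1
      rw [hPeven (p+1), hPodd (p+1),
        show (2 * ((p+1:ℕ):ℤ) - 1 : ℤ) = 2 * ((p:ℕ):ℤ) + 1 by push_cast; ring, hPodd p,
        show (2 * ((p+1:ℕ):ℤ) - 2 : ℤ) = 2 * ((p:ℕ):ℤ) by push_cast; ring, hPeven p]
      have hD0 : X * L (p+1) (p+1) - (L (p+2) (p+1)
          + C (3 * ((p+1:ℕ):ℝ) + α₁ + 1) * L (p+1) (p+1)
          + C (((p+1:ℕ):ℝ) * (3 * ((p+1:ℕ):ℝ) + α₁ + α₂)) * L (p+1) p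
          + C (((p+1:ℕ):ℝ) * (((p+1:ℕ):ℝ) + α₁) * (((p+1:ℕ):ℝ) + α₁ - α₂)) * L p p) = 0 := by
        apply ML9.kernel h1 h2 hZ (p+2) (p+1)
        · have h := ML9.deg_lt ((p+1)+(p+1)) (L (p+1) (p+1)) (L (p+2) (p+1))
            (L (p+1) (p+1)) (L (p+1) p) (L p p)
            (hmonic (p+1) (p+1)) (hdeg (p+1) (p+1))
            (hmonic (p+2) (p+1)) (by rw [hdeg]; try omega)
            (le_of_eq (hdeg (p+1) (p+1))) (by rw [hdeg]; omega) (by rw [hdeg]; omega)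
            (3 * ((p+1:ℕ):ℝ) + α₁ + 1)
            (((p+1:ℕ):ℝ) * (3 * ((p+1:ℕ):ℝ) + α₁ + α₂))
            (((p+1:ℕ):ℝ) * (((p+1:ℕ):ℝ) + α₁) * (((p+1:ℕ):ℝ) + α₁ - α₂))
          exact lt_of_lt_of_le h (by omega)
        · intro k hk
          rw [ML9.expand h1, val1 (p+1) (p+1) (k+1), val1 (p+2) (p+1) k,
            val1 (p+1) (p+1) k, val1 (p+1) p k, val1 p p k,
            show ((k+1:ℕ):ℝ) = (k:ℝ)+1 by push_cast; ring,
            show α₁ - α₂ + ((k:ℝ)+1) = (α₁ - α₂ + (k:ℝ)) + 1 by ring,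
            ML9.PP_shift ((k:ℝ)) p, ML9.PP_shift (α₁ - α₂ + (k:ℝ)) p,
            show α₁ + ((k:ℝ)+1) + 1 = (α₁ + (k:ℝ) + 1) + 1 by ring,
            Real.Gamma_add_one (hG1 k)]
          simp only [ML9.PP_succ]
          push_cast
          ring
        · intro k hk
          rw [ML9.expand h2, val2 (p+1) (p+1) (k+1), val2 (p+2) (p+1) k,
            val2 (p+1) (p+1) k, val2 (p+1) p k, val2 p p k,
            show ((k+1:ℕ):ℝ) = (k:ℝ)+1 by push_cast; ring,
            show α₂ - α₁ + ((k:ℝ)+1) = (α₂ - α₁ + (k:ℝ)) + 1 by ring,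
            ML9.PP_shift ((k:ℝ)) p, ML9.PP_shift (α₂ - α₁ + (k:ℝ)) p,
            show α₂ + ((k:ℝ)+1) + 1 = (α₂ + (k:ℝ) + 1) + 1 by ring,
            Real.Gamma_add_one (hG2 k)]
          simp only [ML9.PP_succ]
          push_cast
          ring
      linear_combination hD0
  · -- odd case
    intro n
    rcases n with _ | p
    · -- n = 0
      rw [hPodd 0, hPeven 0,
        show (2 * ((0:ℕ):ℤ) + 2 : ℤ) = 2 * ((1:ℕ):ℤ) by norm_num, hPeven 1,
        show (2 * ((0:ℕ):ℤ) - 1 : ℤ) = (-1 : ℤ) by norm_num, hPneg (-1) (by norm_num),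
        mul_zero, add_zero]
      have hD0 : X * L 1 0 - (L 1 1 + C (3 * ((0:ℕ):ℝ) + α₂ + 2) * L 1 0
          + C (3 * ((0:ℕ):ℝ) ^ 2 + (α₁ + α₂ + 3) * ((0:ℕ):ℝ) + α₁ + 1) * L 0 0
          + C 0 * L 0 0) = 0 := by
        apply ML9.kernel h1 h2 hZ 1 1
        · have h := ML9.deg_lt 1 (L 1 0) (L 1 1) (L 1 0) (L 0 0) (L 0 0)
            (hmonic 1 0) (by rw [hdeg]) (hmonic 1 1) (by rw [hdeg])
            (by rw [hdeg]) (by rw [hdeg]; omega) (by rw [hdeg]; omega)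
            (3 * ((0:ℕ):ℝ) + α₂ + 2)
            (3 * ((0:ℕ):ℝ) ^ 2 + (α₁ + α₂ + 3) * ((0:ℕ):ℝ) + α₁ + 1) 0
          exact lt_of_lt_of_le h (by omega)
        · intro k hk
          have hk0 : k = 0 := by omega
          subst hk0
          rw [ML9.expand h1, val1 1 0 (0+1), val1 1 1 0, val1 1 0 0, val1 0 0 0]
          simp only [ML9.PP_succ, ML9.PP_zero]
          rw [show α₁ + ((0+1:ℕ):ℝ) + 1 = (α₁ + ((0:ℕ):ℝ) + 1) + 1 by norm_num,
            Real.Gamma_add_one (hG1 0)]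
          push_cast
          ring
        · intro k hk
          have hk0 : k = 0 := by omega
          subst hk0
          rw [ML9.expand h2, val2 1 0 (0+1), val2 1 1 0, val2 1 0 0, val2 0 0 0]
          simp only [ML9.PP_succ, ML9.PP_zero]
          rw [show α₂ + ((0+1:ℕ):ℝ) + 1 = (α₂ + ((0:ℕ):ℝ) + 1) + 1 by norm_num,
            Real.Gamma_add_one (hG2 0)]
          push_cast
          ring
      have hD0' := sub_eq_zero.mp hD0
      rw [hD0']
      simp only [Polynomial.C_0, zero_mul, add_zero]
    · -- n = p + 1
      rw [hPodd (p+1), hPeven (p+1),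
        show (2 * ((p+1:ℕ):ℤ) + 2 : ℤ) = 2 * ((p+2:ℕ):ℤ) by push_cast; ring, hPeven (p+2),
        show (2 * ((p+1:ℕ):ℤ) - 1 : ℤ) = 2 * ((p:ℕ):ℤ) + 1 by push_cast; ring, hPodd p]
      have hD0 : X * L (p+2) (p+1) - (L (p+2) (p+2)
          + C (3 * ((p+1:ℕ):ℝ) + α₂ + 2) * L (p+2) (p+1)
          + C (3 * ((p+1:ℕ):ℝ) ^ 2 + (α₁ + α₂ + 3) * ((p+1:ℕ):ℝ) + α₁ + 1) * L (p+1) (p+1)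
          + C (((p+1:ℕ):ℝ) * (((p+1:ℕ):ℝ) + α₂) * (((p+1:ℕ):ℝ) + α₂ - α₁)) * L (p+1) p) = 0 := by
        apply ML9.kernel h1 h2 hZ (p+2) (p+2)
        · have h := ML9.deg_lt ((p+2)+(p+1)) (L (p+2) (p+1)) (L (p+2) (p+2))
            (L (p+2) (p+1)) (L (p+1) (p+1)) (L (p+1) p)
            (hmonic (p+2) (p+1)) (hdeg (p+2) (p+1))
            (hmonic (p+2) (p+2)) (by rw [hdeg]; try omega)
            (by rw [hdeg]) (by rw [hdeg]; omega) (by rw [hdeg]; omega)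
            (3 * ((p+1:ℕ):ℝ) + α₂ + 2)
            (3 * ((p+1:ℕ):ℝ) ^ 2 + (α₁ + α₂ + 3) * ((p+1:ℕ):ℝ) + α₁ + 1)
            (((p+1:ℕ):ℝ) * (((p+1:ℕ):ℝ) + α₂) * (((p+1:ℕ):ℝ) + α₂ - α₁))
          exact lt_of_lt_of_le h (by omega)
        · intro k hk
          rw [ML9.expand h1, val1 (p+2) (p+1) (k+1), val1 (p+2) (p+2) k,
            val1 (p+2) (p+1) k, val1 (p+1) (p+1) k, val1 (p+1) p k,
            show ((k+1:ℕ):ℝ) = (k:ℝ)+1 by push_cast; ring,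
            show α₁ - α₂ + ((k:ℝ)+1) = (α₁ - α₂ + (k:ℝ)) + 1 by ring,
            ML9.PP_shift ((k:ℝ)) (p+1), ML9.PP_shift (α₁ - α₂ + (k:ℝ)) p,
            show α₁ + ((k:ℝ)+1) + 1 = (α₁ + (k:ℝ) + 1) + 1 by ring,
            Real.Gamma_add_one (hG1 k)]
          simp only [ML9.PP_succ]
          push_cast
          ring
        · intro k hk
          rw [ML9.expand h2, val2 (p+2) (p+1) (k+1), val2 (p+2) (p+2) k,
            val2 (p+2) (p+1) k, val2 (p+1) (p+1) k, val2 (p+1) p k,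
            show ((k+1:ℕ):ℝ) = (k:ℝ)+1 by push_cast; ring,
            show α₂ - α₁ + ((k:ℝ)+1) = (α₂ - α₁ + (k:ℝ)) + 1 by ring,
            ML9.PP_shift ((k:ℝ)) p, ML9.PP_shift (α₂ - α₁ + (k:ℝ)) (p+1),
            show α₂ + ((k:ℝ)+1) + 1 = (α₂ + (k:ℝ) + 1) + 1 by ring,
            Real.Gamma_add_one (hG2 k)]
          simp only [ML9.PP_succ]
          push_cast
          ring
      linear_combination hD0
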